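/- Let G and H be finite abelian groups, B ⊆ H a set that does not tile H, and X ⊆ G × H a set such that X ∩ ({g} × H) is, for every g in the projection of X to G, equal to {g} × (h_g + B) for some h_g ∈ H. If X tiles G × H with translation set M, then the sets {x_m + B}, taken over those m ∈ M for which (X + m) ∩ ({0} × H) ≠ ∅, would tile H — a contradiction. Hence X does not tile G × H. -/
import Mathlib


/-- Let `B ⊆ H` be a set that does not tile the finite abelian group `H`, and let
`X ⊆ G × H` be a set each of whose nonempty `G`-fibers is a translate of `B`. Then
`X` does not tile `G × H` by translations. -/
theorem not_tile_of_fibers_translates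
    {G H : Type*} [AddCommGroup G] [AddCommGroup H] [Fintype G] [Fintype H]
    (B : Set H)
    (hB : ¬ ∃ M : Set H, ∀ x : H, ∃! m, m ∈ M ∧ x - m ∈ B)
    (X : Set (G × H))
    (hfib : ∀ g : G, (∃ h : H, (g, h) ∈ X) →
      ∃ hg : H, {h : H | (g, h) ∈ X} = (hg + ·) '' B) :
    ¬ ∃ M : Set (G × H), ∀ z : G × H, ∃! m, m ∈ M ∧ z - m ∈ X := by
  rintro ⟨M, hM⟩
  apply hB
  classical
  set c : G → H := fun g =>
    if hne : ∃ h : H, (g, h) ∈ X then (hfib g hne).choose else 0 with hc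
  have hcspec : ∀ g, (∃ h : H, (g, h) ∈ X) →
      {h : H | (g, h) ∈ X} = (c g + ·) '' B := by
    intro g hne
    simp only [hc, dif_pos hne]
    exact (hfib g hne).choose_spec
  refine ⟨{t | ∃ m ∈ M, (∃ h : H, (-m.1, h) ∈ X) ∧ t = m.2 + c (-m.1)}, ?_⟩
  intro x
  obtain ⟨m₀, ⟨hm₀M, hm₀X⟩, huniq⟩ := hM (0, x)
  have hsub : ∀ m : G × H, ((0 : G), x) - m = (-m.1, x - m.2) := by
    intro m; ext <;> simp
  rw [hsub] at hm₀X
  have hne₀ : ∃ h : H, (-m₀.1, h) ∈ X := ⟨x - m₀.2, hm₀X⟩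
  have hmem : x - m₀.2 ∈ (c (-m₀.1) + ·) '' B := by
    rw [← hcspec _ hne₀]; exact hm₀X
  obtain ⟨b, hbB, hb⟩ := hmem
  refine ⟨m₀.2 + c (-m₀.1), ⟨⟨m₀, hm₀M, hne₀, rfl⟩, ?_⟩, ?_⟩
  · have : x - (m₀.2 + c (-m₀.1)) = b := by
      have hb' : c (-m₀.1) + b = x - m₀.2 := hb
      rw [sub_add_eq_sub_sub, ← hb']
      abel
    rw [this]; exact hbB
  · rintro t ⟨⟨m, hmM, hne, rfl⟩, htB⟩
    have hx : x - m.2 ∈ {h : H | (-m.1, h) ∈ X} := by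
      rw [hcspec _ hne]
      refine ⟨x - (m.2 + c (-m.1)), htB, ?_⟩
      show c (-m.1) + (x - (m.2 + c (-m.1))) = x - m.2
      generalize c (-m.1) = d
      abel
    have hmx : ((0 : G), x) - m ∈ X := by rw [hsub]; exact hx
    have : m = m₀ := huniq m ⟨hmM, hmx⟩
    rw [this]
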